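/- Let (V⁴, g) be an oriented four-dimensional Euclidean vector space with algebraic Weyl tensor W = W⁺ + W⁻. Let {ω_k⁺} and {ω_k⁻} be orthogonal eigenbases of W⁺ on Λ⁺ and W⁻ on Λ⁻ with eigenvalues λ_k⁺, λ_k⁻, associated to almost complex structures J_k⁺, J_k⁻. Then for the symmetric involutions σ_{i,j} = J_i⁺ J_j⁻, the extension of W to symmetric endomorphisms satisfies W(σ_{i,j}) = (λ_i⁺ + λ_j⁻) σ_{i,j} for all 1 ≤ i, j ≤ 3. -/

import Mathlib

/- Common setup: algebraic Weyl curvature tensors on a Euclidean vector space. -/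

open scoped RealInnerProductSpace
open Finset

/-- A curvature-type 4-linear tensor on `V`. -/
abbrev Tensor4 (V : Type*) [NormedAddCommGroup V] [InnerProductSpace ℝ V] : Type _ :=
  V →ₗ[ℝ] V →ₗ[ℝ] V →ₗ[ℝ] V →ₗ[ℝ] ℝ

variable {V : Type*} [NormedAddCommGroup V] [InnerProductSpace ℝ V] [FiniteDimensional ℝ V]

/-- `W` is an algebraic Weyl curvature tensor: it has the symmetries of a curvature
tensor, satisfies the first Bianchi identity, and is totally trace-free. -/
structure IsWeylTensor (W : Tensor4 V) : Prop where
  antisym₁ : ∀ x y z u, W x y z u = - W y x z u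
  antisym₂ : ∀ x y z u, W x y z u = - W x y u z
  pair_symm : ∀ x y z u, W x y z u = W z u x y
  bianchi : ∀ x y z u, W x y z u + W y z x u + W z x y u = 0
  trace_free : ∀ (b : OrthonormalBasis (Fin (Module.finrank ℝ V)) ℝ V) (x y : V),
      ∑ i, W x (b i) y (b i) = 0

/-- The extension of `W` to endomorphisms, `W(h) = Σᵢ W(eᵢ, ·, h eᵢ, ·)`,
viewed as a bilinear form (identified with an endomorphism via the metric). -/
noncomputable def weylExt {ι : Type*} [Fintype ι]
    (W : Tensor4 V) (b : OrthonormalBasis ι ℝ V) (h : V →ₗ[ℝ] V) (v w : V) : ℝ :=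
  ∑ i, W (b i) v (h (b i)) w

/-- The space `E_W`: endomorphisms `h` with `W(x,y,hz,·) + W(y,z,hx,·) + W(z,x,hy,·) = 0`. -/
def memE (W : Tensor4 V) (h : V →ₗ[ℝ] V) : Prop :=
  ∀ x y z u, W x y (h z) u + W y z (h x) u + W z x (h y) u = 0

/-- The Lie algebra `g_W` of the symmetry group of `W`. -/
def memG (W : Tensor4 V) (h : V →ₗ[ℝ] V) : Prop :=
  ∀ x y z u, W (h x) y z u + W x (h y) z u + W x y (h z) u + W x y z (h u) = 0

/-- Skew-symmetric endomorphisms (identified with 2-forms). -/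
def IsSkew (F : V →ₗ[ℝ] V) : Prop := ∀ v w, ⟪F v, w⟫ = - ⟪v, F w⟫

/-- Symmetric endomorphisms. -/
def IsSym (F : V →ₗ[ℝ] V) : Prop := ∀ v w, ⟪F v, w⟫ = ⟪v, F w⟫

/-- The bilinear form `g(F·,·)` associated to an endomorphism `F`. -/
noncomputable def form (F : V →ₗ[ℝ] V) (v w : V) : ℝ := ⟪F v, w⟫

/- Four-dimensional setup: (anti-)self-duality of 2-forms with respect to the orientation
determined by a positively oriented orthonormal basis `e` of `V⁴`. -/

/-- A 2-form `α` is self-dual with respect to the oriented orthonormal basis `e`. -/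
def SelfDual (e : OrthonormalBasis (Fin 4) ℝ V) (α : V → V → ℝ) : Prop :=
  α (e 0) (e 1) = α (e 2) (e 3) ∧ α (e 0) (e 2) = α (e 3) (e 1) ∧
    α (e 0) (e 3) = α (e 1) (e 2)

/-- A 2-form `α` is anti-self-dual with respect to the oriented orthonormal basis `e`. -/
def AntiSelfDual (e : OrthonormalBasis (Fin 4) ℝ V) (α : V → V → ℝ) : Prop :=
  α (e 0) (e 1) = - α (e 2) (e 3) ∧ α (e 0) (e 2) = - α (e 3) (e 1) ∧
    α (e 0) (e 3) = - α (e 1) (e 2)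


section AuxWeyl

variable {V : Type*} [NormedAddCommGroup V] [InnerProductSpace ℝ V] [FiniteDimensional ℝ V]

omit [FiniteDimensional ℝ V] in
lemma aux_skew (J : V →ₗ[ℝ] V) (horth : ∀ v w : V, ⟪J v, J w⟫ = ⟪v, w⟫)
    (hsq : J ∘ₗ J = -LinearMap.id) : IsSkew J := by
  intro v w
  have h2 : J (J w) = -w := by
    have := LinearMap.ext_iff.mp hsq w
    simpa using this
  have h3 : ⟪J v, J (J w)⟫ = ⟪v, J w⟫ := horth v (J w)
  calc ⟪J v, w⟫ = ⟪J v, -(J (J w))⟫ := by rw [h2, neg_neg]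
    _ = -⟪J v, J (J w)⟫ := by rw [inner_neg_right]
    _ = -⟪v, J w⟫ := by rw [h3]

omit [FiniteDimensional ℝ V] in
lemma aux_pars (e : OrthonormalBasis (Fin 4) ℝ V) (x y : V) :
    ∑ m, ⟪x, e m⟫ * ⟪y, e m⟫ = ⟪x, y⟫ := by
  have h := congrArg (fun z => ⟪x, z⟫) (e.sum_repr' y)
  simp only [inner_sum, real_inner_smul_right] at h
  rw [← h]
  exact Finset.sum_congr rfl fun m _ => by rw [real_inner_comm (e m) y]; ring

omit [FiniteDimensional ℝ V] in
lemma aux_expand2 (e : OrthonormalBasis (Fin 4) ℝ V) (W : Tensor4 V) (a x c d : V) :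
    W a x c d = ∑ m, ⟪x, e m⟫ * W a (e m) c d := by
  conv_lhs => rw [← e.sum_repr' x]
  rw [map_sum]
  simp only [LinearMap.sum_apply]
  refine Finset.sum_congr rfl fun m _ => ?_
  rw [real_inner_comm (e m) x]
  simp [LinearMap.map_smul, LinearMap.smul_apply, smul_eq_mul]

omit [FiniteDimensional ℝ V] in
lemma aux_expand3 (e : OrthonormalBasis (Fin 4) ℝ V) (W : Tensor4 V) (a b x d : V) :
    W a b x d = ∑ m, ⟪x, e m⟫ * W a b (e m) d := by
  conv_lhs => rw [← e.sum_repr' x]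
  rw [map_sum]
  simp only [LinearMap.sum_apply]
  refine Finset.sum_congr rfl fun m _ => ?_
  rw [real_inner_comm (e m) x]
  simp [LinearMap.map_smul, LinearMap.smul_apply, smul_eq_mul]

omit [FiniteDimensional ℝ V] in
lemma aux_bianchi (e : OrthonormalBasis (Fin 4) ℝ V) (W : Tensor4 V)
    (ha1 : ∀ x y z u : V, W x y z u = - W y x z u)
    (hbi : ∀ x y z u : V, W x y z u + W y z x u + W z x y u = 0)
    (F : V →ₗ[ℝ] V) (hF : IsSkew F) (v w : V) :
    ∑ m, W (e m) v (F (e m)) w = -(1/2) * ∑ m, W (F (e m)) (e m) v w := by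
  have hmid : ∑ m, W v (F (e m)) (e m) w = ∑ m, W (e m) v (F (e m)) w := by
    calc ∑ m, W v (F (e m)) (e m) w
        = ∑ m, ∑ n, ⟪F (e m), e n⟫ * W v (e n) (e m) w :=
          Finset.sum_congr rfl fun m _ => aux_expand2 e W v (F (e m)) (e m) w
      _ = ∑ n, ∑ m, ⟪F (e m), e n⟫ * W v (e n) (e m) w := Finset.sum_comm
      _ = ∑ n, -(W v (e n) (F (e n)) w) := by
          refine Finset.sum_congr rfl fun n _ => ?_
          have hterm : ∀ m : Fin 4, ⟪F (e m), e n⟫ * W v (e n) (e m) w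
              = -(⟪F (e n), e m⟫ * W v (e n) (e m) w) := by
            intro m
            rw [hF (e m) (e n), real_inner_comm (e m) (F (e n))]
            ring
          rw [Finset.sum_congr rfl fun m _ => hterm m, Finset.sum_neg_distrib]
          rw [← aux_expand3 e W v (e n) (F (e n)) w]
      _ = ∑ n, W (e n) v (F (e n)) w := by
          refine Finset.sum_congr rfl fun n _ => ?_
          rw [ha1 v (e n) (F (e n)) w]; ring
  have hb : ∑ m, (W (e m) v (F (e m)) w + W v (F (e m)) (e m) w + W (F (e m)) (e m) v w) = 0 :=
    Finset.sum_eq_zero fun m _ => hbi (e m) v (F (e m)) w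
  rw [Finset.sum_add_distrib, Finset.sum_add_distrib, hmid] at hb
  linarith

omit [FiniteDimensional ℝ V] in
lemma aux_skew_diag (J : V →ₗ[ℝ] V) (hJ : IsSkew J) (x : V) : ⟪J x, x⟫ = 0 := by
  have h := hJ x x
  have h2 := real_inner_comm x (J x)
  linarith

omit [FiniteDimensional ℝ V] in
lemma aux_skew_anti_inner (J K : V →ₗ[ℝ] V) (hJ : IsSkew J) (hK : IsSkew K)
    (hanti : ∀ x, J (K x) = -(K (J x))) (x : V) : ⟪J x, K x⟫ = 0 := by
  have h1 : ⟪J x, K x⟫ = -⟪x, J (K x)⟫ := hJ x (K x)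
  rw [hanti x, inner_neg_right, neg_neg] at h1
  have h2 : ⟪K x, J x⟫ = -⟪x, K (J x)⟫ := hK x (J x)
  have hc := real_inner_comm (K x) (J x)
  linarith

omit [FiniteDimensional ℝ V] in
lemma aux_hs_mp (e : OrthonormalBasis (Fin 4) ℝ V) (A B : V →ₗ[ℝ] V)
    (hA : IsSkew A) (hB : IsSkew B)
    (hAasd : AntiSelfDual e (form A)) (hBsd : SelfDual e (form B)) :
    ∑ m, ⟪A (e m), B (e m)⟫ = 0 := by
  have hAs : ∀ m n : Fin 4, ⟪A (e n), e m⟫ = -⟪A (e m), e n⟫ := by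
    intro m n
    rw [hA (e n) (e m), real_inner_comm (e n) (A (e m))]
  have hBs : ∀ m n : Fin 4, ⟪B (e n), e m⟫ = -⟪B (e m), e n⟫ := by
    intro m n
    rw [hB (e n) (e m), real_inner_comm (e n) (B (e m))]
  obtain ⟨a1, a2, a3⟩ := hAasd
  obtain ⟨b1, b2, b3⟩ := hBsd
  unfold form at a1 a2 a3 b1 b2 b3
  have A23 : ⟪A (e 2), e 3⟫ = -⟪A (e 0), e 1⟫ := by linarith
  have A12 : ⟪A (e 1), e 2⟫ = -⟪A (e 0), e 3⟫ := by linarith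
  have A13 : ⟪A (e 1), e 3⟫ = ⟪A (e 0), e 2⟫ := by
    linarith [a2, hAs (1:Fin 4) 3]
  have B23 : ⟪B (e 2), e 3⟫ = ⟪B (e 0), e 1⟫ := by linarith
  have B12 : ⟪B (e 1), e 2⟫ = ⟪B (e 0), e 3⟫ := by linarith
  have B13 : ⟪B (e 1), e 3⟫ = -⟪B (e 0), e 2⟫ := by linarith [b2, hBs (1:Fin 4) 3]
  have hterm : ∀ m, ⟪A (e m), B (e m)⟫ = ∑ n, ⟪A (e m), e n⟫ * ⟪B (e m), e n⟫ :=
    fun m => (aux_pars e (A (e m)) (B (e m))).symm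
  rw [Finset.sum_congr rfl fun m _ => hterm m]
  simp only [Fin.sum_univ_four]
  rw [aux_skew_diag A hA, aux_skew_diag A hA, aux_skew_diag A hA, aux_skew_diag A hA]
  rw [hAs 0 1, hAs 0 2, hAs 0 3, hAs 1 2, hAs 1 3, hAs 2 3]
  rw [hBs 0 1, hBs 0 2, hBs 0 3, hBs 1 2, hBs 1 3, hBs 2 3]
  rw [A23, A12, A13, B23, B12, B13]
  ring

omit [FiniteDimensional ℝ V] in
lemma aux_hs_wedge (e : OrthonormalBasis (Fin 4) ℝ V) (G : V →ₗ[ℝ] V) (hG : IsSkew G)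
    (x y : V) :
    ∑ m, ⟪(⟪x, e m⟫ • y - ⟪y, e m⟫ • x : V), G (e m)⟫ = 2 * ⟪G x, y⟫ := by
  have hterm : ∀ m : Fin 4, ⟪(⟪x, e m⟫ • y - ⟪y, e m⟫ • x : V), G (e m)⟫
      = ⟪y, e m⟫ * ⟪G x, e m⟫ - ⟪x, e m⟫ * ⟪G y, e m⟫ := by
    intro m
    have g1 : ⟪y, G (e m)⟫ = -⟪G y, e m⟫ := by have := hG y (e m); linarith
    have g2 : ⟪x, G (e m)⟫ = -⟪G x, e m⟫ := by have := hG x (e m); linarith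
    simp only [inner_sub_left, real_inner_smul_left, g1, g2]
    ring
  rw [Finset.sum_congr rfl fun m _ => hterm m, Finset.sum_sub_distrib,
    aux_pars e y (G x), aux_pars e x (G y)]
  have h1 := hG x y
  have h2 := real_inner_comm y (G x)
  linarith

omit [FiniteDimensional ℝ V] in
lemma aux_sum_sign (f : Fin 3 → ℝ) (t : Fin 3) (S : ℝ) :
    ∑ k, f k * ((if k = t then 1 else -1) * S) = (2 * f t - ∑ k, f k) * S := by
  have hterm : ∀ k : Fin 3, f k * ((if k = t then (1:ℝ) else -1) * S)
      = (if k = t then 2 * (f k * S) else 0) - f k * S := by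
    intro k; by_cases h : k = t <;> simp [h] <;> ring
  rw [Finset.sum_congr rfl fun k _ => hterm k, Finset.sum_sub_distrib]
  rw [Finset.sum_ite_eq' Finset.univ t (fun k => 2 * (f k * S))]
  simp only [Finset.mem_univ, if_true]
  rw [← Finset.sum_mul]
  ring

end AuxWeyl

/-- if `ω_k⁺`, `ω_k⁻` are eigenbases of `W⁺`, `W⁻` on `Λ⁺`, `Λ⁻` with
eigenvalues `λ_k⁺`, `λ_k⁻`, associated to almost complex structures `J_k⁺`, `J_k⁻`,
then `W(σ_{i,j}) = (λ_i⁺ + λ_j⁻) σ_{i,j}` for the involutions `σ_{i,j} = J_i⁺ J_j⁻`. -/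
theorem stmt13 (e : OrthonormalBasis (Fin 4) ℝ V)
    (W : Tensor4 V) (hW : IsWeylTensor W)
    (Jp Jm : Fin 3 → (V →ₗ[ℝ] V)) (lp lm : Fin 3 → ℝ)
    -- the `J_k±` are g-compatible almost complex structures
    (hporth : ∀ k (v w : V), ⟪Jp k v, Jp k w⟫ = ⟪v, w⟫)
    (hmorth : ∀ k (v w : V), ⟪Jm k v, Jm k w⟫ = ⟪v, w⟫)
    (hpsq : ∀ k, Jp k ∘ₗ Jp k = -LinearMap.id)
    (hmsq : ∀ k, Jm k ∘ₗ Jm k = -LinearMap.id)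
    -- quaternion relations within each family
    (hpq : Jp 0 ∘ₗ Jp 1 = Jp 2 ∧ Jp 1 ∘ₗ Jp 2 = Jp 0 ∧ Jp 2 ∘ₗ Jp 0 = Jp 1)
    (hmq : Jm 0 ∘ₗ Jm 1 = Jm 2 ∧ Jm 1 ∘ₗ Jm 2 = Jm 0 ∧ Jm 2 ∘ₗ Jm 0 = Jm 1)
    (hpanti : ∀ k l, k ≠ l → Jp k ∘ₗ Jp l = -(Jp l ∘ₗ Jp k))
    (hmanti : ∀ k l, k ≠ l → Jm k ∘ₗ Jm l = -(Jm l ∘ₗ Jm k))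
    -- the two families commute
    (hcomm : ∀ k l, Jp k ∘ₗ Jm l = Jm l ∘ₗ Jp k)
    -- `ω_k⁺` are self-dual, `ω_k⁻` are anti-self-dual
    (hpsd : ∀ k, SelfDual e (form (Jp k)))
    (hmasd : ∀ k, AntiSelfDual e (form (Jm k)))
    -- together they form a basis of the 2-forms
    (hspan : ∀ F : V →ₗ[ℝ] V, IsSkew F →
      ∃ c d : Fin 3 → ℝ, F = (∑ k, c k • Jp k) + ∑ k, d k • Jm k)
    -- eigenform equations `W(ω_k±) = λ_k± ω_k±`
    (heigp : ∀ k v w, weylExt W e (Jp k) v w = lp k * form (Jp k) v w)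
    (heigm : ∀ k v w, weylExt W e (Jm k) v w = lm k * form (Jm k) v w) :
    ∀ i j v w, weylExt W e (Jp i ∘ₗ Jm j) v w
        = (lp i + lm j) * form (Jp i ∘ₗ Jm j) v w := by
  obtain ⟨ha1, ha2, hps, hbi, htf⟩ := hW
  -- pointwise versions of the operator identities
  have hpsq' : ∀ k (x : V), Jp k (Jp k x) = -x := fun k x => by
    simpa using LinearMap.ext_iff.mp (hpsq k) x
  have hmsq' : ∀ k (x : V), Jm k (Jm k x) = -x := fun k x => by
    simpa using LinearMap.ext_iff.mp (hmsq k) x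
  have hcomm' : ∀ k l (x : V), Jp k (Jm l x) = Jm l (Jp k x) := fun k l x => by
    simpa using LinearMap.ext_iff.mp (hcomm k l) x
  have hpanti' : ∀ k l, k ≠ l → ∀ x : V, Jp k (Jp l x) = -(Jp l (Jp k x)) := fun k l h x => by
    simpa using LinearMap.ext_iff.mp (hpanti k l h) x
  have hmanti' : ∀ k l, k ≠ l → ∀ x : V, Jm k (Jm l x) = -(Jm l (Jm k x)) := fun k l h x => by
    simpa using LinearMap.ext_iff.mp (hmanti k l h) x
  have hskp : ∀ k, IsSkew (Jp k) := fun k => aux_skew _ (hporth k) (hpsq k)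
  have hskm : ∀ k, IsSkew (Jm k) := fun k => aux_skew _ (hmorth k) (hmsq k)
  have hee : ∀ m : Fin 4, ⟪e m, e m⟫ = (1:ℝ) := by
    intro m
    rw [real_inner_self_eq_norm_mul_norm, e.orthonormal.1 m, one_mul]
  -- the gamma (first-pair contraction) eigen equations
  have gamp : ∀ k v w, ∑ m, W (Jp k (e m)) (e m) v w = -2 * (lp k * ⟪Jp k v, w⟫) := by
    intro k v w
    have h1 := heigp k v w
    unfold weylExt form at h1
    have h2 := aux_bianchi e W ha1 hbi (Jp k) (hskp k) v w
    linarith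
  have gamm : ∀ k v w, ∑ m, W (Jm k (e m)) (e m) v w = -2 * (lm k * ⟪Jm k v, w⟫) := by
    intro k v w
    have h1 := heigm k v w
    unfold weylExt form at h1
    have h2 := aux_bianchi e W ha1 hbi (Jm k) (hskm k) v w
    linarith
  -- Hilbert-Schmidt orthogonality of the J families
  have hsPP : ∀ k l : Fin 3, k ≠ l → ∑ m : Fin 4, ⟪Jp k (e m), Jp l (e m)⟫ = 0 := by
    intro k l hkl
    exact Finset.sum_eq_zero fun m _ =>
      aux_skew_anti_inner (Jp k) (Jp l) (hskp k) (hskp l) (hpanti' k l hkl) (e m)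
  have hsMM : ∀ k l : Fin 3, k ≠ l → ∑ m : Fin 4, ⟪Jm k (e m), Jm l (e m)⟫ = 0 := by
    intro k l hkl
    exact Finset.sum_eq_zero fun m _ =>
      aux_skew_anti_inner (Jm k) (Jm l) (hskm k) (hskm l) (hmanti' k l hkl) (e m)
  have hsPPd : ∀ k : Fin 3, ∑ m : Fin 4, ⟪Jp k (e m), Jp k (e m)⟫ = 4 := by
    intro k
    have h : ∀ m : Fin 4, ⟪Jp k (e m), Jp k (e m)⟫ = 1 := fun m => by
      rw [hporth k (e m) (e m), hee m]
    rw [Finset.sum_congr rfl fun m _ => h m]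
    norm_num
  have hsMMd : ∀ k : Fin 3, ∑ m : Fin 4, ⟪Jm k (e m), Jm k (e m)⟫ = 4 := by
    intro k
    have h : ∀ m : Fin 4, ⟪Jm k (e m), Jm k (e m)⟫ = 1 := fun m => by
      rw [hmorth k (e m) (e m), hee m]
    rw [Finset.sum_congr rfl fun m _ => h m]
    norm_num
  have hsMP : ∀ k l : Fin 3, ∑ m : Fin 4, ⟪Jm k (e m), Jp l (e m)⟫ = 0 := fun k l =>
    aux_hs_mp e (Jm k) (Jp l) (hskm k) (hskp l) (hmasd k) (hpsd l)
  have hsPM : ∀ k l : Fin 3, ∑ m : Fin 4, ⟪Jp k (e m), Jm l (e m)⟫ = 0 := by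
    intro k l
    have hcomm2 : ∑ m : Fin 4, ⟪Jp k (e m), Jm l (e m)⟫
        = ∑ m : Fin 4, ⟪Jm l (e m), Jp k (e m)⟫ :=
      Finset.sum_congr rfl fun m _ => real_inner_comm _ _
    rw [hcomm2]
    exact hsMP l k
  -- the master formula for W
  have master : ∀ x y v w : V, W x y v w =
      (∑ k, lp k * (⟪Jp k x, y⟫ * ⟪Jp k v, w⟫)) / 2
      + (∑ k, lm k * (⟪Jm k x, y⟫ * ⟪Jm k v, w⟫)) / 2 := by
    intro x y v w
    set F : V →ₗ[ℝ] V := (innerₛₗ ℝ x).smulRight y - (innerₛₗ ℝ y).smulRight x with hFdef2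
    have hFap : ∀ z : V, F z = ⟪x, z⟫ • y - ⟪y, z⟫ • x := fun z => by
      simp [hFdef2]
    have hFskew : IsSkew F := by
      intro a b
      rw [hFap, hFap]
      simp only [inner_sub_left, inner_sub_right, real_inner_smul_left, real_inner_smul_right]
      rw [real_inner_comm a y, real_inner_comm a x]
      ring
    obtain ⟨c, d, hcd⟩ := hspan F hFskew
    have hFm : ∀ z : V, F z = (∑ k, c k • Jp k z) + ∑ k, d k • Jm k z := by
      intro z
      rw [hcd]
      simp
    have hc : ∀ t, c t = ⟪Jp t x, y⟫ / 2 := by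
      intro t
      have h1 : ∑ m, ⟪F (e m), Jp t (e m)⟫ = 2 * ⟪Jp t x, y⟫ := by
        rw [Finset.sum_congr rfl fun m _ => by rw [hFap (e m)]]
        exact aux_hs_wedge e (Jp t) (hskp t) x y
      have h2 : ∑ m, ⟪F (e m), Jp t (e m)⟫ = 4 * c t := by
        have hterm : ∀ m, ⟪F (e m), Jp t (e m)⟫
            = (∑ k, c k * ⟪Jp k (e m), Jp t (e m)⟫)
              + ∑ k, d k * ⟪Jm k (e m), Jp t (e m)⟫ := by
          intro m
          rw [hFm (e m)]
          simp [inner_add_left, sum_inner, real_inner_smul_left]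
        rw [Finset.sum_congr rfl fun m _ => hterm m, Finset.sum_add_distrib]
        have hP : ∑ m : Fin 4, ∑ k, c k * ⟪Jp k (e m), Jp t (e m)⟫ = 4 * c t := by
          rw [Finset.sum_comm]
          have hk : ∀ k : Fin 3, ∑ m : Fin 4, c k * ⟪Jp k (e m), Jp t (e m)⟫
              = if k = t then 4 * c t else 0 := by
            intro k
            rw [← Finset.mul_sum]
            by_cases hkt : k = t
            · subst hkt; rw [hsPPd k]; simp [mul_comm]
            · rw [hsPP k t hkt]; simp [hkt]
          rw [Finset.sum_congr rfl fun k _ => hk k]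
          simp
        have hM : ∑ m : Fin 4, ∑ k, d k * ⟪Jm k (e m), Jp t (e m)⟫ = 0 := by
          rw [Finset.sum_comm]
          refine Finset.sum_eq_zero fun k _ => ?_
          rw [← Finset.mul_sum, hsMP k t, mul_zero]
        rw [hP, hM, add_zero]
      linarith
    have hd : ∀ t, d t = ⟪Jm t x, y⟫ / 2 := by
      intro t
      have h1 : ∑ m, ⟪F (e m), Jm t (e m)⟫ = 2 * ⟪Jm t x, y⟫ := by
        rw [Finset.sum_congr rfl fun m _ => by rw [hFap (e m)]]
        exact aux_hs_wedge e (Jm t) (hskm t) x y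
      have h2 : ∑ m, ⟪F (e m), Jm t (e m)⟫ = 4 * d t := by
        have hterm : ∀ m, ⟪F (e m), Jm t (e m)⟫
            = (∑ k, c k * ⟪Jp k (e m), Jm t (e m)⟫)
              + ∑ k, d k * ⟪Jm k (e m), Jm t (e m)⟫ := by
          intro m
          rw [hFm (e m)]
          simp [inner_add_left, sum_inner, real_inner_smul_left]
        rw [Finset.sum_congr rfl fun m _ => hterm m, Finset.sum_add_distrib]
        have hP : ∑ m : Fin 4, ∑ k, c k * ⟪Jp k (e m), Jm t (e m)⟫ = 0 := by
          rw [Finset.sum_comm]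
          refine Finset.sum_eq_zero fun k _ => ?_
          rw [← Finset.mul_sum, hsPM k t, mul_zero]
        have hM : ∑ m : Fin 4, ∑ k, d k * ⟪Jm k (e m), Jm t (e m)⟫ = 4 * d t := by
          rw [Finset.sum_comm]
          have hk : ∀ k : Fin 3, ∑ m : Fin 4, d k * ⟪Jm k (e m), Jm t (e m)⟫
              = if k = t then 4 * d t else 0 := by
            intro k
            rw [← Finset.mul_sum]
            by_cases hkt : k = t
            · subst hkt; rw [hsMMd k]; simp [mul_comm]
            · rw [hsMM k t hkt]; simp [hkt]
          rw [Finset.sum_congr rfl fun k _ => hk k]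
          simp
        rw [hP, hM, zero_add]
      linarith
    have g1 : ∑ m, W (F (e m)) (e m) v w = -2 * W x y v w := by
      have hterm : ∀ m, W (F (e m)) (e m) v w
          = ⟪x, e m⟫ * W y (e m) v w - ⟪y, e m⟫ * W x (e m) v w := by
        intro m
        rw [hFap (e m)]
        rw [sub_eq_add_neg, ← neg_smul, map_add, map_smul, map_smul]
        simp only [LinearMap.add_apply, LinearMap.smul_apply, smul_eq_mul]
        ring
      rw [Finset.sum_congr rfl fun m _ => hterm m, Finset.sum_sub_distrib,
        ← aux_expand2 e W y x v w, ← aux_expand2 e W x y v w]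
      rw [ha1 y x v w]
      ring
    have g2 : ∑ m, W (F (e m)) (e m) v w
        = (∑ k, c k * (-2 * (lp k * ⟪Jp k v, w⟫)))
          + ∑ k, d k * (-2 * (lm k * ⟪Jm k v, w⟫)) := by
      have hterm : ∀ m, W (F (e m)) (e m) v w
          = (∑ k, c k * W (Jp k (e m)) (e m) v w)
            + ∑ k, d k * W (Jm k (e m)) (e m) v w := by
        intro m
        rw [hFm (e m)]
        simp [map_add, map_sum, LinearMap.map_smul, LinearMap.add_apply, LinearMap.sum_apply,
          LinearMap.smul_apply, smul_eq_mul]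
      rw [Finset.sum_congr rfl fun m _ => hterm m, Finset.sum_add_distrib]
      congr 1
      · rw [Finset.sum_comm]
        exact Finset.sum_congr rfl fun k _ => by rw [← Finset.mul_sum, gamp k v w]
      · rw [Finset.sum_comm]
        exact Finset.sum_congr rfl fun k _ => by rw [← Finset.mul_sum, gamm k v w]
    have e1 : ∑ k, c k * (-2 * (lp k * ⟪Jp k v, w⟫))
        = -(∑ k, lp k * (⟪Jp k x, y⟫ * ⟪Jp k v, w⟫)) := by
      rw [← Finset.sum_neg_distrib]
      exact Finset.sum_congr rfl fun k _ => by rw [hc k]; ring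
    have e2 : ∑ k, d k * (-2 * (lm k * ⟪Jm k v, w⟫))
        = -(∑ k, lm k * (⟪Jm k x, y⟫ * ⟪Jm k v, w⟫)) := by
      rw [← Finset.sum_neg_distrib]
      exact Finset.sum_congr rfl fun k _ => by rw [hd k]; ring
    rw [e1, e2] at g2
    rw [g1] at g2
    linarith
  -- sum of all eigenvalues vanishes (trace-freeness)
  have hdim : Module.finrank ℝ V = 4 := by
    rw [Module.finrank_eq_card_basis e.toBasis, Fintype.card_fin]
  have htr : ∀ x y : V, ∑ m : Fin 4, W x (e m) y (e m) = 0 := by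
    intro x y
    have h0 := htf (e.reindex (finCongr hdim).symm) x y
    have heq : ∑ i, W x ((e.reindex (finCongr hdim).symm) i) y ((e.reindex (finCongr hdim).symm) i)
        = ∑ m : Fin 4, W x (e m) y (e m) := by
      apply Fintype.sum_equiv (finCongr hdim)
      intro i
      simp [OrthonormalBasis.reindex_apply]
    rw [← heq]
    exact h0
  have hsum0 : (∑ k, lp k) + (∑ k, lm k) = 0 := by
    have h := htr (e 0) (e 0)
    have hme : ∑ m : Fin 4, W (e 0) (e m) (e 0) (e m)
        = (∑ k, lp k) / 2 + (∑ k, lm k) / 2 := by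
      rw [Finset.sum_congr rfl fun m _ => master (e 0) (e m) (e 0) (e m),
        Finset.sum_add_distrib]
      congr 1
      · rw [← Finset.sum_div, Finset.sum_comm]
        congr 1
        refine Finset.sum_congr rfl fun k _ => ?_
        rw [← Finset.mul_sum, aux_pars e (Jp k (e 0)) (Jp k (e 0)),
          hporth k (e 0) (e 0), hee 0, mul_one]
      · rw [← Finset.sum_div, Finset.sum_comm]
        congr 1
        refine Finset.sum_congr rfl fun k _ => ?_
        rw [← Finset.mul_sum, aux_pars e (Jm k (e 0)) (Jm k (e 0)),
          hmorth k (e 0) (e 0), hee 0, mul_one]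
    rw [hme] at h
    linarith
  -- the final computation
  intro i j v w
  have hsym : ∀ a b : V, ⟪Jp i (Jm j a), b⟫ = ⟪a, Jp i (Jm j b)⟫ := by
    intro a b
    have h1 : ⟪Jp i (Jm j a), b⟫ = -⟪Jm j a, Jp i b⟫ := hskp i (Jm j a) b
    have h2 : ⟪Jm j a, Jp i b⟫ = -⟪a, Jm j (Jp i b)⟫ := hskm j a (Jp i b)
    rw [h1, h2, neg_neg, ← hcomm' i j b]
  have keyp : ∀ k : Fin 3, ⟪Jp k v, Jp i (Jm j (Jp k w))⟫
      = (if k = i then 1 else -1) * ⟪Jp i (Jm j v), w⟫ := by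
    intro k
    have h0 : ⟪Jp k v, Jp i (Jm j (Jp k w))⟫ = -⟪v, Jp k (Jp i (Jm j (Jp k w)))⟫ :=
      hskp k v _
    by_cases hk : k = i
    · subst hk
      have hv : Jp k (Jp k (Jm j (Jp k w))) = -(Jp k (Jm j w)) := by
        rw [hpsq' k (Jm j (Jp k w)), hcomm' k j w]
      rw [h0, hv, inner_neg_right, neg_neg, ← hsym v w]
      simp
    · have hik : i ≠ k := fun h => hk h.symm
      have hv : Jp k (Jp i (Jm j (Jp k w))) = Jp i (Jm j w) := by
        rw [← hcomm' k j w, hpanti' i k hik (Jm j w), map_neg,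
          hpsq' k (Jp i (Jm j w)), neg_neg]
      rw [h0, hv, ← hsym v w]
      simp [hk]
  have keym : ∀ k : Fin 3, ⟪Jm k v, Jp i (Jm j (Jm k w))⟫
      = (if k = j then 1 else -1) * ⟪Jp i (Jm j v), w⟫ := by
    intro k
    have h0 : ⟪Jm k v, Jp i (Jm j (Jm k w))⟫ = -⟪v, Jm k (Jp i (Jm j (Jm k w)))⟫ :=
      hskm k v _
    have hpull : Jm k (Jp i (Jm j (Jm k w))) = Jp i (Jm k (Jm j (Jm k w))) :=
      (hcomm' i k (Jm j (Jm k w))).symm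
    by_cases hk : k = j
    · subst hk
      have hv : Jm k (Jm k (Jm k w)) = -(Jm k w) := hmsq' k (Jm k w)
      rw [h0, hpull, hv, map_neg, inner_neg_right, neg_neg, ← hsym v w]
      simp
    · have hjk : j ≠ k := fun h => hk h.symm
      have hv : Jm k (Jm j (Jm k w)) = Jm j w := by
        rw [hmanti' j k hjk w, map_neg, hmsq' k (Jm j w), neg_neg]
      rw [h0, hpull, hv, ← hsym v w]
      simp [hk]
  -- the sum over m of each eigen-term
  have hsumP : ∀ k : Fin 3, ∑ m : Fin 4, ⟪Jp k (e m), v⟫ * ⟪Jp k (Jp i (Jm j (e m))), w⟫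
      = ⟪Jp k v, Jp i (Jm j (Jp k w))⟫ := by
    intro k
    have hterm : ∀ m : Fin 4, ⟪Jp k (e m), v⟫ * ⟪Jp k (Jp i (Jm j (e m))), w⟫
        = ⟪Jp k v, e m⟫ * ⟪Jp i (Jm j (Jp k w)), e m⟫ := by
      intro m
      have f1 : ⟪Jp k (e m), v⟫ = -⟪Jp k v, e m⟫ := by
        have h1 := hskp k (e m) v
        have h2 := real_inner_comm (e m) (Jp k v)
        have h3 := hskp k v (e m)
        linarith
      have f2 : ⟪Jp k (Jp i (Jm j (e m))), w⟫ = -⟪Jp i (Jm j (Jp k w)), e m⟫ := by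
        have h1 : ⟪Jp k (Jp i (Jm j (e m))), w⟫ = -⟪Jp i (Jm j (e m)), Jp k w⟫ :=
          hskp k (Jp i (Jm j (e m))) w
        have h2 : ⟪Jp i (Jm j (e m)), Jp k w⟫ = ⟪e m, Jp i (Jm j (Jp k w))⟫ :=
          hsym (e m) (Jp k w)
        rw [h1, h2, real_inner_comm (e m) (Jp i (Jm j (Jp k w)))]
      rw [f1, f2]
      ring
    rw [Finset.sum_congr rfl fun m _ => hterm m,
      aux_pars e (Jp k v) (Jp i (Jm j (Jp k w)))]
  have hsumM : ∀ k : Fin 3, ∑ m : Fin 4, ⟪Jm k (e m), v⟫ * ⟪Jm k (Jp i (Jm j (e m))), w⟫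
      = ⟪Jm k v, Jp i (Jm j (Jm k w))⟫ := by
    intro k
    have hterm : ∀ m : Fin 4, ⟪Jm k (e m), v⟫ * ⟪Jm k (Jp i (Jm j (e m))), w⟫
        = ⟪Jm k v, e m⟫ * ⟪Jp i (Jm j (Jm k w)), e m⟫ := by
      intro m
      have f1 : ⟪Jm k (e m), v⟫ = -⟪Jm k v, e m⟫ := by
        have h1 := hskm k (e m) v
        have h2 := real_inner_comm (e m) (Jm k v)
        have h3 := hskm k v (e m)
        linarith
      have f2 : ⟪Jm k (Jp i (Jm j (e m))), w⟫ = -⟪Jp i (Jm j (Jm k w)), e m⟫ := by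
        have h1 : ⟪Jm k (Jp i (Jm j (e m))), w⟫ = -⟪Jp i (Jm j (e m)), Jm k w⟫ :=
          hskm k (Jp i (Jm j (e m))) w
        have h2 : ⟪Jp i (Jm j (e m)), Jm k w⟫ = ⟪e m, Jp i (Jm j (Jm k w))⟫ :=
          hsym (e m) (Jm k w)
        rw [h1, h2, real_inner_comm (e m) (Jp i (Jm j (Jm k w)))]
      rw [f1, f2]
      ring
    rw [Finset.sum_congr rfl fun m _ => hterm m,
      aux_pars e (Jm k v) (Jp i (Jm j (Jm k w)))]
  -- now assemble
  unfold weylExt form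
  simp only [LinearMap.comp_apply]
  rw [Finset.sum_congr rfl fun m _ => master (e m) v (Jp i (Jm j (e m))) w,
    Finset.sum_add_distrib]
  have hPfin : ∑ m : Fin 4, (∑ k, lp k * (⟪Jp k (e m), v⟫ * ⟪Jp k (Jp i (Jm j (e m))), w⟫)) / 2
      = (2 * lp i - ∑ k, lp k) * ⟪Jp i (Jm j v), w⟫ / 2 := by
    rw [← Finset.sum_div, Finset.sum_comm]
    congr 1
    have hk : ∀ k : Fin 3,
        ∑ m : Fin 4, lp k * (⟪Jp k (e m), v⟫ * ⟪Jp k (Jp i (Jm j (e m))), w⟫)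
        = lp k * ((if k = i then 1 else -1) * ⟪Jp i (Jm j v), w⟫) := by
      intro k
      rw [← Finset.mul_sum, hsumP k, keyp k]
    rw [Finset.sum_congr rfl fun k _ => hk k, aux_sum_sign]
  have hMfin : ∑ m : Fin 4, (∑ k, lm k * (⟪Jm k (e m), v⟫ * ⟪Jm k (Jp i (Jm j (e m))), w⟫)) / 2
      = (2 * lm j - ∑ k, lm k) * ⟪Jp i (Jm j v), w⟫ / 2 := by
    rw [← Finset.sum_div, Finset.sum_comm]
    congr 1
    have hk : ∀ k : Fin 3,
        ∑ m : Fin 4, lm k * (⟪Jm k (e m), v⟫ * ⟪Jm k (Jp i (Jm j (e m))), w⟫)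
        = lm k * ((if k = j then 1 else -1) * ⟪Jp i (Jm j v), w⟫) := by
      intro k
      rw [← Finset.mul_sum, hsumM k, keym k]
    rw [Finset.sum_congr rfl fun k _ => hk k, aux_sum_sign]
  rw [hPfin, hMfin]
  linear_combination (-(⟪Jp i (Jm j v), w⟫) / 2) * hsum0
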